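/- Expected Groves payment is constant in the agent's future randomness: if p_i(t) is a quadratic function of the random vectors {X(τ,s), U(τ,s) : τ ≥ t} all of which have zero conditional mean given h_{k−1} (for t ≥ k), plus h_{k−1}-measurable terms, and the cross terms pair a zero-conditional-mean factor with an h_{k−1}-measurable factor, then E[p_i(t) | h_{k−1}] equals an h_{k−1}-measurable constant that does not depend on agent i's bid at time k−1, provided the zero-mean factors' conditional second moments do not depend on that bid. -/

import Mathlib

open Finset MeasureTheory

/-- Expected Groves payment is constant in the agent's bid: if, for every bid `b` of agent `i`
at time `k−1`, the payment decomposes as `p b = q + Σ_l Y_l(b)·Z_l`, where `q` (the purely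
quadratic part in the zero-mean future layers plus `h_{k−1}`-measurable terms) does not depend
on `b`, each cross-term factor `Y_l(b)` is `h_{k−1}`-measurable, and each `Z_l` has zero
conditional mean given `h_{k−1}`, then `E[p b | h_{k−1}]` is (a.e.) the same
`h_{k−1}`-measurable function for every bid `b` — namely `E[q | h_{k−1}]`. -/
theorem expected_groves_payment_bid_independent
    {Ω : Type*} {mΩ : MeasurableSpace Ω} (μ : Measure Ω) [IsFiniteMeasure μ]
    (m : MeasurableSpace Ω) (hm : m ≤ mΩ)          -- the σ-algebra h_{k−1}
    (L : ℕ)                                         -- number of cross terms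
    (p : ℝ → Ω → ℝ)                                 -- payment as a function of agent i's bid
    (q : Ω → ℝ)                                     -- bid-independent part
    (Y : ℝ → Fin L → Ω → ℝ)                         -- h_{k−1}-measurable cross factors
    (Z : Fin L → Ω → ℝ)                             -- zero-conditional-mean factors
    (hdecomp : ∀ b ω, p b ω = q ω + ∑ l, Y b l ω * Z l ω)
    (hqint : Integrable q μ)
    (hYmeas : ∀ b l, StronglyMeasurable[m] (Y b l))
    (hZint : ∀ l, Integrable (Z l) μ)
    (hprodint : ∀ b l, Integrable (fun ω => Y b l ω * Z l ω) μ)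
    (hZzero : ∀ l, μ[Z l | m] =ᵐ[μ] 0) :
    (∀ b, μ[p b | m] =ᵐ[μ] μ[q | m]) ∧
      ∀ b₁ b₂, μ[p b₁ | m] =ᵐ[μ] μ[p b₂ | m] := by
  have key : ∀ b, μ[p b | m] =ᵐ[μ] μ[q | m] := by
    intro b
    have hpq : p b = fun ω => q ω + ∑ l, Y b l ω * Z l ω := by
      funext ω; exact hdecomp b ω
    rw [hpq]
    have hsumint : Integrable (fun ω => ∑ l, Y b l ω * Z l ω) μ :=
      integrable_finset_sum _ fun l _ => hprodint b l
    have h1 : μ[fun ω => q ω + ∑ l, Y b l ω * Z l ω | m]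
        =ᵐ[μ] μ[q | m] + μ[fun ω => ∑ l, Y b l ω * Z l ω | m] :=
      condExp_add hqint hsumint m
    have h2 : μ[fun ω => ∑ l, Y b l ω * Z l ω | m]
        =ᵐ[μ] ∑ l, μ[fun ω => Y b l ω * Z l ω | m] := by
      have h := condExp_finsetSum (s := Finset.univ)
        (f := fun l ω => Y b l ω * Z l ω) (fun l _ => hprodint b l) (m := m)
      have he : (∑ l : Fin L, fun ω => Y b l ω * Z l ω) = fun ω => ∑ l, Y b l ω * Z l ω := by
        funext ω; simp
      rwa [he] at h
    have h3 : ∀ l : Fin L, μ[fun ω => Y b l ω * Z l ω | m] =ᵐ[μ] (0 : Ω → ℝ) := by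
      intro l
      have h := condExp_mul_of_stronglyMeasurable_left (hYmeas b l) (hprodint b l) (hZint l)
      refine h.trans ?_
      filter_upwards [hZzero l] with ω hω
      simp [hω]
    have h4 : (∀ᵐ ω ∂μ, ∀ l : Fin L, (μ[fun ω => Y b l ω * Z l ω | m]) ω = 0) :=
      ae_all_iff.mpr fun l => h3 l
    refine h1.trans ?_
    filter_upwards [h2, h4] with ω h2ω h4ω
    simp only [Pi.add_apply, h2ω, Finset.sum_apply]
    simp [h4ω]
  exact ⟨key, fun b₁ b₂ => (key b₁).trans (key b₂).symm⟩
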